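/- Suppose A and B are totally symmetric Latin squares of order n with n not divisible by 3. If A and B are paratopic, then A and B are isomorphic. -/

import Mathlib

/-- A Latin square of order `n`: each row and each column is a bijection. -/
def IsLatin {n : ℕ} (L : Fin n → Fin n → Fin n) : Prop :=
  (∀ i, Function.Bijective (L i)) ∧ (∀ j, Function.Bijective fun i => L i j)

/-- `L` is symmetric: `L(i,j) = L(j,i)`. -/
def IsSymmetric {n : ℕ} (L : Fin n → Fin n → Fin n) : Prop :=
  ∀ i j, L i j = L j i

/-- `L` is semisymmetric: `L(i,j) = k → L(j,k) = i`. -/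
def IsSemisymmetric {n : ℕ} (L : Fin n → Fin n → Fin n) : Prop :=
  ∀ i j, L j (L i j) = i

/-- Totally symmetric: symmetric and semisymmetric. -/
def IsTotallySymmetric {n : ℕ} (L : Fin n → Fin n → Fin n) : Prop :=
  IsSymmetric L ∧ IsSemisymmetric L

/-- Reduced: the first row and first column are in natural order. -/
def IsReducedLS {n : ℕ} (L : Fin n → Fin n → Fin n) : Prop :=
  ∀ i j : Fin n, ((i : ℕ) = 0 → L i j = j) ∧ ((j : ℕ) = 0 → L i j = i)

/-- Idempotent: `L(i,i) = i` for all `i`. -/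
def IsIdempotent {n : ℕ} (L : Fin n → Fin n → Fin n) : Prop :=
  ∀ i, L i i = i

/-- Unipotent: all diagonal entries are equal. -/
def IsUnipotent {n : ℕ} (L : Fin n → Fin n → Fin n) : Prop :=
  ∀ i j, L i i = L j j

/-- `B` is isotopic to `A`: `B = A(α,β,γ)`. -/
def Isotopic {n : ℕ} (A B : Fin n → Fin n → Fin n) : Prop :=
  ∃ α β γ : Equiv.Perm (Fin n), ∀ i j, B (α i) (β j) = γ (A i j)

/-- `B` is rrs-isotopic to `A`: `B = A(α,α,γ)`. -/
def RrsIsotopic {n : ℕ} (A B : Fin n → Fin n → Fin n) : Prop :=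
  ∃ α γ : Equiv.Perm (Fin n), ∀ i j, B (α i) (α j) = γ (A i j)

/-- `B` is isomorphic to `A`: `B = A(α,α,α)`. -/
def Isomorphic {n : ℕ} (A B : Fin n → Fin n → Fin n) : Prop :=
  ∃ α : Equiv.Perm (Fin n), ∀ i j, B (α i) (α j) = α (A i j)

/-- `B` is one of the six conjugates of `A`, obtained by uniformly permuting
the coordinates of the triples `(i, j, A i j)`. -/
def IsConjugate {n : ℕ} (A B : Fin n → Fin n → Fin n) : Prop :=
  (∀ i j, B i j = A i j) ∨ (∀ i j, B j i = A i j) ∨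
  (∀ i j, B (A i j) j = i) ∨ (∀ i j, B i (A i j) = j) ∨
  (∀ i j, B j (A i j) = i) ∨ (∀ i j, B (A i j) i = j)

/-- `B` is paratopic to `A`: `B` is isotopic to some conjugate of `A`. -/
def Paratopic {n : ℕ} (A B : Fin n → Fin n → Fin n) : Prop :=
  ∃ C : Fin n → Fin n → Fin n, IsConjugate A C ∧ Isotopic C B

section Aux

variable {n : ℕ}

def NrowP (A : Fin n → Fin n → Fin n) (p : Equiv.Perm (Fin n)) : Prop :=
  ∀ i j, A (p i) j = p⁻¹ (A i j)

lemma NrowP_one (A : Fin n → Fin n → Fin n) : NrowP A 1 := by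
  intro i j; simp

lemma NrowP_inv {A : Fin n → Fin n → Fin n} {p : Equiv.Perm (Fin n)}
    (h : NrowP A p) : NrowP A p⁻¹ := by
  intro i j
  have h1 := h (p⁻¹ i) j
  rw [show p (p⁻¹ i) = i from by simp] at h1
  rw [h1]; simp

lemma NrowP_mul {A : Fin n → Fin n → Fin n} {p q : Equiv.Perm (Fin n)}
    (hc : Commute p q) (hp : NrowP A p) (hq : NrowP A q) : NrowP A (p * q) := by
  intro i j
  have hcc : p⁻¹ * q⁻¹ = q⁻¹ * p⁻¹ := (hc.inv_inv).eq
  calc A ((p * q) i) j = A (p (q i)) j := by rw [Equiv.Perm.mul_apply]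
    _ = p⁻¹ (A (q i) j) := hp (q i) j
    _ = p⁻¹ (q⁻¹ (A i j)) := by rw [hq i j]
    _ = (p⁻¹ * q⁻¹) (A i j) := by rw [Equiv.Perm.mul_apply]
    _ = (q⁻¹ * p⁻¹) (A i j) := by rw [hcc]
    _ = (p * q)⁻¹ (A i j) := by rw [mul_inv_rev]

lemma NrowP_pow {A : Fin n → Fin n → Fin n} {p : Equiv.Perm (Fin n)}
    (hp : NrowP A p) (k : ℕ) : NrowP A (p ^ k) := by
  induction k with
  | zero => simpa using NrowP_one A
  | succ k ih =>
      rw [pow_succ]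
      exact NrowP_mul ((Commute.refl p).pow_left k) ih hp

lemma NrowP_zpow {A : Fin n → Fin n → Fin n} {p : Equiv.Perm (Fin n)}
    (hp : NrowP A p) (k : ℤ) : NrowP A (p ^ k) := by
  cases k with
  | ofNat m => simpa using NrowP_pow hp m
  | negSucc m => rw [zpow_negSucc]; exact NrowP_inv (NrowP_pow hp (m + 1))

lemma exists_fixed_of_pow_three {q : Equiv.Perm (Fin n)} (hn : ¬ (3 ∣ n))
    (hq : q ^ 3 = 1) : ∃ x, q x = x := by
  by_contra h
  push_neg at h
  have hsupp : q.support = Finset.univ := by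
    ext x; simp [Equiv.Perm.mem_support, h x]
  have hcard : q.support.card = n := by rw [hsupp, Finset.card_univ, Fintype.card_fin]
  have hdvd : (3 : ℕ) ∣ q.support.card := by
    rw [← Equiv.Perm.sum_cycleType]
    refine Multiset.dvd_sum ?_
    intro c hc
    have h2 : 2 ≤ c := Equiv.Perm.two_le_of_mem_cycleType hc
    have hd : c ∣ orderOf q := by
      rw [← Equiv.Perm.lcm_cycleType]; exact Multiset.dvd_lcm hc
    have h3 : orderOf q ∣ 3 := orderOf_dvd_of_pow_eq_one hq
    have hc3 : c ∣ 3 := hd.trans h3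
    have := (Nat.prime_three).eq_one_or_self_of_dvd c hc3
    omega
  exact hn (hcard ▸ hdvd)

lemma ts_iso (hn : ¬ (3 ∣ n)) (A B : Fin n → Fin n → Fin n)
    (hA : IsLatin A) (hAs : IsSymmetric A) (hAss : IsSemisymmetric A)
    (hBs : IsSymmetric B) (hBss : IsSemisymmetric B)
    (α β γ : Equiv.Perm (Fin n)) (h1 : ∀ i j, B (α i) (β j) = γ (A i j)) :
    Isomorphic A B := by
  set a : Equiv.Perm (Fin n) := α⁻¹ * β with ha
  set b : Equiv.Perm (Fin n) := β⁻¹ * γ with hb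
  have ha_app : ∀ i, α (a i) = β i := by
    intro i; simp [ha, Equiv.Perm.mul_apply]
  have hb_app : ∀ i, β (b i) = γ i := by
    intro i; simp [hb, Equiv.Perm.mul_apply]
  have hainv : ∀ i, a⁻¹ i = β⁻¹ (α i) := by
    intro i; simp [ha, Equiv.Perm.mul_apply]
  have hbinv : ∀ i, b⁻¹ i = γ⁻¹ (β i) := by
    intro i; simp [hb, Equiv.Perm.mul_apply]
  have hca : ∀ k, γ⁻¹ (α k) = b⁻¹ (a⁻¹ k) := by
    intro k; rw [hainv, hbinv]; simp
  -- derived isotopies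
  have h2 : ∀ j k, B (β j) (γ k) = α (A j k) := by
    intro j k
    obtain ⟨i, hi⟩ := (hA.2 j).2 k
    have hi' : A i j = k := hi
    calc B (β j) (γ k) = B (β j) (B (α i) (β j)) := by rw [h1 i j, hi']
      _ = α i := hBss (α i) (β j)
      _ = α (A j k) := by rw [← hi', hAss i j]
  have h3 : ∀ k i, B (γ k) (α i) = β (A k i) := by
    intro k i
    have h5ki : A (A i k) k = i := by rw [hAs]; exact hAss i k
    calc B (γ k) (α i) = B (γ k) (α (A (A i k) k)) := by rw [h5ki]
      _ = B (γ k) (B (β (A i k)) (γ k)) := by rw [← h2 (A i k) k]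
      _ = β (A i k) := hBss _ _
      _ = β (A k i) := by rw [hAs i k]
  have h4 : ∀ i j, B (γ i) (β j) = α (A i j) := by
    intro i j; rw [hBs, h2 j i, hAs j i]
  have h3' : ∀ i j, B (α i) (γ j) = β (A i j) := by
    intro i j; rw [hBs, h3 j i, hAs j i]
  -- key autotopism computations
  have T2 : ∀ i j, A (a i) (b j) = γ⁻¹ (α (A i j)) := by
    intro i j
    have h := h1 (a i) (b j)
    rw [ha_app, hb_app, h2 i j] at h
    rw [h]; simp
  have T5 : ∀ i j, A i (b j) = b⁻¹ (A i j) := by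
    intro i j
    have h := h1 i (b j)
    rw [hb_app, h3' i j] at h
    rw [hbinv, h]; simp
  have T4 : ∀ i j, A (a (b i)) j = γ⁻¹ (α (A i j)) := by
    intro i j
    have h := h1 (a (b i)) j
    rw [ha_app, hb_app, h4 i j] at h
    rw [h]; simp
  have Na : NrowP A a := by
    intro i j
    have e : b⁻¹ (A (a i) j) = b⁻¹ (a⁻¹ (A i j)) :=
      (T5 (a i) j).symm.trans ((T2 i j).trans (hca (A i j)))
    exact (Equiv.injective b⁻¹) e
  have Nb : NrowP A b := by
    intro i j
    rw [hAs, T5 j i, hAs j i]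
  have Ncol : ∀ p : Equiv.Perm (Fin n), NrowP A p → ∀ i j, A i (p j) = p⁻¹ (A i j) := by
    intro p hp i j
    rw [hAs, hp j i, hAs j i]
  -- a and b commute
  have hn0 : n ≠ 0 := by rintro rfl; exact hn ⟨0, rfl⟩
  have hcomm : Commute a b := by
    have key : ∀ k, a⁻¹ (b⁻¹ k) = b⁻¹ (a⁻¹ k) := by
      intro k
      obtain ⟨j, hj⟩ := (hA.1 ⟨0, Nat.pos_of_ne_zero hn0⟩).2 k
      have e1 : A (a (b ⟨0, Nat.pos_of_ne_zero hn0⟩)) j = a⁻¹ (b⁻¹ k) := by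
        rw [Na, Nb, hj]
      have e2 : A (a (b ⟨0, Nat.pos_of_ne_zero hn0⟩)) j = b⁻¹ (a⁻¹ k) := by
        rw [T4, ← hj, hca, hj]
      exact e1.symm.trans e2
    have hinv : Commute a⁻¹ b⁻¹ := Equiv.ext fun k => by
      simpa [Equiv.Perm.mul_apply] using key k
    simpa using hinv.inv_inv
  -- the element w = a * a * b
  set w : Equiv.Perm (Fin n) := a * a * b with hw
  have Nw : NrowP A w :=
    NrowP_mul (hcomm.mul_left hcomm) (NrowP_mul (Commute.refl a) Na Na) Nb
  have hcw_a : Commute a w :=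
    ((Commute.refl a).mul_right (Commute.refl a)).mul_right hcomm
  have hcw_b : Commute b w :=
    (hcomm.symm.mul_right hcomm.symm).mul_right (Commute.refl b)
  -- a power-of-q lemma
  have key_one : ∀ q : Equiv.Perm (Fin n), NrowP A q → q ^ 3 = 1 → q = 1 := by
    intro q hqN hq3
    obtain ⟨x, hx⟩ := exists_fixed_of_pow_three hn hq3
    have hfix : ∀ k, q⁻¹ k = k := by
      intro k
      obtain ⟨j, hj⟩ := (hA.1 x).2 k
      have h := hqN x j
      rw [hx, hj] at h
      exact h.symm
    have hq1 : q⁻¹ = 1 := Equiv.ext fun k => (hfix k).trans rfl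
    exact inv_eq_one.mp hq1
  set m : ℕ := orderOf w with hm
  have hm3 : ¬ (3 ∣ m) := by
    intro h3
    have hmpos : 0 < m := orderOf_pos w
    have hq3 : (w ^ (m / 3)) ^ 3 = 1 := by
      rw [← pow_mul, Nat.div_mul_cancel h3]; exact pow_orderOf_eq_one w
    have hq1 : w ^ (m / 3) = 1 := key_one _ (NrowP_pow Nw _) hq3
    have hdvd : m ∣ m / 3 := hm ▸ orderOf_dvd_of_pow_eq_one hq1
    have hpos3 : 0 < m / 3 := Nat.div_pos (Nat.le_of_dvd hmpos h3) (by norm_num)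
    have hle := Nat.le_of_dvd hpos3 hdvd
    have hlt := Nat.div_lt_self hmpos (by norm_num : 1 < 3)
    omega
  have hcop : Nat.Coprime 3 m := (Nat.Prime.coprime_iff_not_dvd Nat.prime_three).mpr hm3
  set x : Equiv.Perm (Fin n) := w ^ (Nat.gcdA 3 m) with hxdef
  have hx3 : x ^ 3 = w := by
    have hbez := Nat.gcd_eq_gcd_ab 3 m
    have hg : Nat.gcd 3 m = 1 := hcop
    rw [hg] at hbez
    push_cast at hbez
    have hm1 : w ^ ((m : ℤ) * Nat.gcdB 3 m) = 1 := by
      rw [zpow_mul, zpow_natCast, pow_orderOf_eq_one, one_zpow]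
    calc x ^ 3 = w ^ (Nat.gcdA 3 m * 3) := by
          rw [hxdef, ← zpow_natCast (w ^ Nat.gcdA 3 m) 3, ← zpow_mul]
          norm_num
      _ = w ^ ((3 : ℤ) * Nat.gcdA 3 m) := by rw [mul_comm]
      _ = w ^ ((3 : ℤ) * Nat.gcdA 3 m) * w ^ ((m : ℤ) * Nat.gcdB 3 m) := by
          rw [hm1, mul_one]
      _ = w ^ ((3 : ℤ) * Nat.gcdA 3 m + (m : ℤ) * Nat.gcdB 3 m) := (zpow_add w _ _).symm
      _ = w ^ (1 : ℤ) := by rw [← hbez]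
      _ = w := zpow_one w
  have hax : Commute a x := hcw_a.zpow_right _
  have hbx : Commute b x := hcw_b.zpow_right _
  have hx3' : x * x * x = a * a * b := by
    rw [← hw, ← hx3, pow_succ, pow_succ, pow_one]
  have hxxx : x * (x * (b⁻¹ * (a⁻¹ * x))) = a := by
    calc x * (x * (b⁻¹ * (a⁻¹ * x)))
        = x * (x * (b⁻¹ * (x * a⁻¹))) := by rw [(hax.inv_left).eq]
      _ = x * (x * ((x * b⁻¹) * a⁻¹)) := by
          rw [show b⁻¹ * (x * a⁻¹) = (x * b⁻¹) * a⁻¹ from by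
            rw [← mul_assoc, (hbx.inv_left).eq]]
      _ = (x * x * x) * b⁻¹ * a⁻¹ := by simp [mul_assoc]
      _ = (a * a * b) * b⁻¹ * a⁻¹ := by rw [hx3']
      _ = a := by group
  have hkey : x⁻¹ * (a⁻¹ * x)⁻¹ = (a * b)⁻¹ * x := by
    rw [mul_inv_rev, inv_inv, mul_inv_rev]
    calc x⁻¹ * (x⁻¹ * a)
        = x⁻¹ * (x⁻¹ * (x * (x * (b⁻¹ * (a⁻¹ * x))))) := by rw [hxxx]
      _ = b⁻¹ * (a⁻¹ * x) := by simp [inv_mul_cancel_left]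
      _ = b⁻¹ * a⁻¹ * x := by rw [mul_assoc]
  -- final assembly
  set y : Equiv.Perm (Fin n) := a⁻¹ * x with hydef
  have Nx : NrowP A x := NrowP_zpow Nw _
  have Ny : NrowP A y := NrowP_mul (hax.inv_left) (NrowP_inv Na) Nx
  have hγα : ∀ k, γ ((a * b)⁻¹ k) = α k := by
    intro k
    have : ((a * b)⁻¹ : Equiv.Perm (Fin n)) k = γ⁻¹ (α k) := by
      rw [mul_inv_rev, Equiv.Perm.mul_apply, ← hca k]
    rw [this]; simp
  refine ⟨α * x, ?_⟩
  intro i j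
  have hsub : α (x j) = β (y j) := by
    rw [hydef, Equiv.Perm.mul_apply, hainv]
    simp
  calc B ((α * x) i) ((α * x) j)
      = B (α (x i)) (β (y j)) := by rw [Equiv.Perm.mul_apply, Equiv.Perm.mul_apply, hsub]
    _ = γ (A (x i) (y j)) := h1 (x i) (y j)
    _ = γ (x⁻¹ (A i (y j))) := by rw [Nx i (y j)]
    _ = γ (x⁻¹ (y⁻¹ (A i j))) := by rw [Ncol y Ny i j]
    _ = γ ((x⁻¹ * y⁻¹) (A i j)) := by rw [Equiv.Perm.mul_apply]
    _ = γ (((a * b)⁻¹ * x) (A i j)) := by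
        rw [show x⁻¹ * y⁻¹ = (a * b)⁻¹ * x from by rw [hydef]; exact hkey]
    _ = γ ((a * b)⁻¹ (x (A i j))) := by rw [Equiv.Perm.mul_apply]
    _ = α (x (A i j)) := hγα _
    _ = (α * x) (A i j) := rfl

end Aux

theorem stmt18 {n : ℕ} (hn : ¬ (3 ∣ n)) (A B : Fin n → Fin n → Fin n)
    (hA : IsLatin A) (hAts : IsTotallySymmetric A)
    (hB : IsLatin B) (hBts : IsTotallySymmetric B)
    (hpar : Paratopic A B) : Isomorphic A B := by
  obtain ⟨hAs, hAss⟩ := hAts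
  obtain ⟨hBs, hBss⟩ := hBts
  obtain ⟨C, hconj, hiso⟩ := hpar
  have h5 : ∀ i j, A (A i j) j = i := fun i j => by rw [hAs]; exact hAss i j
  have h6 : ∀ i j, A i (A i j) = j := fun i j => by rw [hAs i j]; exact hAss j i
  have hCA : ∀ i j, C i j = A i j := by
    rcases hconj with h|h|h|h|h|h <;> intro i j
    · exact h i j
    · exact (h j i).trans (hAs j i)
    · have hh := h (A i j) j
      rw [h5 i j] at hh
      exact hh
    · have hh := h i (A i j)
      rw [h6 i j] at hh
      exact hh
    · have hh := h (A j i) i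
      rw [h5 j i] at hh
      exact hh.trans (hAs j i)
    · have hh := h j (A j i)
      rw [h6 j i] at hh
      exact hh.trans (hAs j i)
  obtain ⟨α, β, γ, hI⟩ := hiso
  have h1 : ∀ i j, B (α i) (β j) = γ (A i j) := fun i j => by rw [hI i j, hCA i j]
  exact ts_iso hn A B hA hAs hAss hBs hBss α β γ h1
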